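/- Let p be an odd prime and let i be a nonnegative integer. Then St^{(i,0)}(Q_{2,0}) = Q_{2,0}^p if i = p²−1; St^{(i,0)}(Q_{2,0}) = (−1)^k·C(k,r)·Q_{2,0}^{r+1}·Q_{2,1}^{k−r} if i = kp+r with integers 0 ≤ r ≤ k < p; and St^{(i,0)}(Q_{2,0}) = 0 otherwise. (Here C(k,r) denotes the binomial coefficient reduced mod p.) -/

import Mathlib

open MvPolynomial Finset

/-- The total Steenrod-Milnor operation `φ : R → R[t₁,t₂]`,
sending `y_k ↦ y_k + y_k^p t₁ + y_k^{p²} t₂`. Here `R = F_p[y₁,y₂]`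
and `R[t₁,t₂]` is modelled as `MvPolynomial (Fin 2) R`. -/
noncomputable def phi (p : ℕ) :
    MvPolynomial (Fin 2) (ZMod p) →ₐ[ZMod p]
      MvPolynomial (Fin 2) (MvPolynomial (Fin 2) (ZMod p)) :=
  aeval (fun k => C (X k) + C (X k ^ p) * X 0 + C (X k ^ (p ^ 2)) * X 1)

/-- The Steenrod-Milnor operation `St^{(i,j)}` : the coefficient of
`t₁^i t₂^j` in `φ f`. -/
noncomputable def St (p i j : ℕ) (f : MvPolynomial (Fin 2) (ZMod p)) :
    MvPolynomial (Fin 2) (ZMod p) :=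
  coeff (Finsupp.single (0 : Fin 2) i + Finsupp.single (1 : Fin 2) j) (phi p f)

/-- `L₂ = y₁ y₂^p - y₁^p y₂`. -/
noncomputable def L2 (p : ℕ) : MvPolynomial (Fin 2) (ZMod p) :=
  X 0 * X 1 ^ p - X 0 ^ p * X 1

/-- `L_{2,0} = y₁^p y₂^{p²} - y₁^{p²} y₂^p`. -/
noncomputable def L20 (p : ℕ) : MvPolynomial (Fin 2) (ZMod p) :=
  X 0 ^ p * X 1 ^ (p ^ 2) - X 0 ^ (p ^ 2) * X 1 ^ p

/-- `L_{2,1} = y₁ y₂^{p²} - y₁^{p²} y₂`. -/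
noncomputable def L21 (p : ℕ) : MvPolynomial (Fin 2) (ZMod p) :=
  X 0 * X 1 ^ (p ^ 2) - X 0 ^ (p ^ 2) * X 1

namespace StAux

/-- Evaluation `t₁ ↦ X`, `t₂ ↦ 0` into one-variable polynomials. -/
noncomputable def psi (p : ℕ) :
    MvPolynomial (Fin 2) (MvPolynomial (Fin 2) (ZMod p)) →ₐ[MvPolynomial (Fin 2) (ZMod p)]
      Polynomial (MvPolynomial (Fin 2) (ZMod p)) :=
  aeval ![Polynomial.X, 0]

lemma coeff_single_eq (p i : ℕ) (g : MvPolynomial (Fin 2) (MvPolynomial (Fin 2) (ZMod p))) :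
    MvPolynomial.coeff (Finsupp.single (0 : Fin 2) i) g = (psi p g).coeff i := by
  induction g using MvPolynomial.induction_on' with
  | monomial m a =>
      rw [psi, aeval_monomial, MvPolynomial.coeff_monomial,
        Finsupp.prod_fintype _ _ (fun j => pow_zero _), Fin.prod_univ_two]
      simp only [Matrix.cons_val_zero, Matrix.cons_val_one, Matrix.head_cons]
      have halg : algebraMap (MvPolynomial (Fin 2) (ZMod p))
          (Polynomial (MvPolynomial (Fin 2) (ZMod p))) a = Polynomial.C a := rfl
      by_cases h1 : m 1 = 0
      · rw [h1, pow_zero, mul_one, halg, Polynomial.coeff_C_mul, Polynomial.coeff_X_pow]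
        have hiff : m = Finsupp.single 0 i ↔ m 0 = i := by
          constructor
          · rintro rfl; simp
          · intro h0; ext j; fin_cases j <;> simp [Finsupp.single_apply, h0, h1]
        by_cases h0 : m 0 = i
        · rw [if_pos (hiff.mpr h0), if_pos h0.symm, mul_one]
        · rw [if_neg (fun hm => h0 (hiff.mp hm)), if_neg (fun h => h0 h.symm), mul_zero]
      · rw [zero_pow h1, mul_zero, mul_zero, Polynomial.coeff_zero, if_neg]
        intro hm
        apply h1
        rw [hm]
        simp [Finsupp.single_apply]
  | add f g hf hg => simp [map_add, MvPolynomial.coeff_add, hf, hg]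

lemma st_eq (p i : ℕ) (f : MvPolynomial (Fin 2) (ZMod p)) :
    St p i 0 f = (psi p (phi p f)).coeff i := by
  rw [St, Finsupp.single_zero, add_zero, coeff_single_eq]

lemma psi_phi_X (p : ℕ) (k : Fin 2) :
    psi p (phi p (X k)) = Polynomial.C (X k) + Polynomial.C (X k ^ p) * Polynomial.X := by
  simp [phi, psi, aeval_X, map_add, map_mul, algebraMap_eq]

variable (p : ℕ) [Fact p.Prime]

lemma L2_pow : L2 p ^ p = L20 p := by
  rw [L2, L20, sub_pow_char, mul_pow, mul_pow, ← pow_mul, ← pow_mul, ← pow_two]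

lemma L2_ne_zero : L2 p ≠ 0 := by
  intro h
  have h2 : MvPolynomial.coeff (Finsupp.single (0:Fin 2) 1 + Finsupp.single 1 p) (L2 p) = 1 := by
    rw [L2]
    have e1 : (X 0 * X 1 ^ p : MvPolynomial (Fin 2) (ZMod p))
        = monomial (Finsupp.single 0 1 + Finsupp.single 1 p) 1 := by
      rw [X_pow_eq_monomial, X, monomial_mul, one_mul]
    have e2 : (X 0 ^ p * X 1 : MvPolynomial (Fin 2) (ZMod p))
        = monomial (Finsupp.single 0 p + Finsupp.single 1 1) 1 := by
      rw [X_pow_eq_monomial, X, monomial_mul, one_mul]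
    rw [e1, e2, MvPolynomial.coeff_sub, MvPolynomial.coeff_monomial, MvPolynomial.coeff_monomial,
      if_pos rfl, if_neg, sub_zero]
    intro hc
    have := DFunLike.congr_fun hc 0
    have hp2 : 2 ≤ p := (Fact.out : p.Prime).two_le
    simp [Finsupp.single_apply] at this
    omega
  rw [h] at h2
  simp at h2

lemma Q0_eq (Q0 : MvPolynomial (Fin 2) (ZMod p)) (hQ0 : Q0 * L2 p = L20 p) :
    Q0 = L2 p ^ (p - 1) := by
  have hp1 : 1 ≤ p := (Fact.out : p.Prime).pos
  apply mul_right_cancel₀ (L2_ne_zero p)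
  rw [hQ0, ← pow_succ, Nat.sub_add_cancel hp1, L2_pow]

lemma psi_phi_L2 :
    psi p (phi p (L2 p)) = Polynomial.C (L2 p) + Polynomial.C (L21 p) * Polynomial.X ^ p
      + Polynomial.C (L20 p) * Polynomial.X ^ (p + 1) := by
  have hf : ∀ y : MvPolynomial (Fin 2) (ZMod p),
      (Polynomial.C y + Polynomial.C y ^ p * Polynomial.X)^p
        = Polynomial.C y ^ p + Polynomial.C y ^ (p^2) * Polynomial.X^p := fun y => by
    rw [add_pow_char, mul_pow, ← pow_mul, ← pow_two]
  conv_lhs => rw [L2]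
  simp only [map_sub, map_mul, map_pow, psi_phi_X]
  rw [hf, hf, L2, L21, L20]
  simp only [map_sub, map_mul, map_pow]
  ring

lemma W_pow (Q0 Q1 : MvPolynomial (Fin 2) (ZMod p)) :
    (1 + Polynomial.C Q1 * Polynomial.X^p + Polynomial.C Q0 * Polynomial.X^(p+1))^(p-1)
    = ∑ k ∈ range p, ∑ r ∈ range (k+1),
        Polynomial.C (((p-1).choose k : MvPolynomial (Fin 2) (ZMod p)) *
          ((k.choose r : MvPolynomial (Fin 2) (ZMod p))) * Q0^r * Q1^(k-r))
          * Polynomial.X^(p*k+r) := by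
  have hp1 : 1 ≤ p := (Fact.out : p.Prime).pos
  have h1 : (1 + Polynomial.C Q1 * Polynomial.X^p + Polynomial.C Q0 * Polynomial.X^(p+1)
      : Polynomial (MvPolynomial (Fin 2) (ZMod p)))
      = (Polynomial.C Q0 * Polynomial.X^(p+1) + Polynomial.C Q1 * Polynomial.X^p) + 1 := by
    ring
  rw [h1, add_pow]
  rw [show p - 1 + 1 = p from Nat.sub_add_cancel hp1]
  refine Finset.sum_congr rfl fun k hk => ?_
  rw [add_pow, Finset.sum_mul, Finset.sum_mul]
  refine Finset.sum_congr rfl fun r hr => ?_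
  have hrk : r ≤ k := Nat.lt_succ_iff.mp (Finset.mem_range.mp hr)
  obtain ⟨d, rfl⟩ : ∃ d, k = r + d := ⟨k - r, by omega⟩
  rw [Nat.add_sub_cancel_left, one_pow, mul_one]
  rw [← Polynomial.C_eq_natCast, ← Polynomial.C_eq_natCast, mul_pow, mul_pow,
    ← Polynomial.C_pow, ← Polynomial.C_pow, ← pow_mul, ← pow_mul]
  rw [show (p+1)*r = p*r + r from by ring, show p * (r+d) + r = (p*r + r) + p*d from by ring]
  rw [pow_add]
  simp only [map_mul]
  ring

lemma rep_unique {p k r k' r' : ℕ} (hp : 0 < p) (hr : r < p) (hr' : r' < p)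
    (h : p*k + r = p*k' + r') : k = k' ∧ r = r' := by
  have h1 : (p*k + r) / p = k := by rw [Nat.mul_add_div hp, Nat.div_eq_of_lt hr, add_zero]
  have h2 : (p*k' + r') / p = k' := by rw [Nat.mul_add_div hp, Nat.div_eq_of_lt hr', add_zero]
  have hk : k = k' := by rw [← h1, h, h2]
  subst hk
  exact ⟨rfl, Nat.add_left_cancel h⟩

lemma choose_sign {p : ℕ} (hp : p.Prime) : ∀ k, k < p → ((p-1).choose k : ZMod p) = (-1)^k := by
  intro k
  induction k with
  | zero => intro _; simp
  | succ k ih =>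
    intro hk
    have hklt : k < p := Nat.lt_of_succ_lt hk
    have hpascal : (p-1).choose k + (p-1).choose (k+1) = p.choose (k+1) := by
      conv_rhs => rw [show p = (p-1)+1 from (Nat.succ_pred_eq_of_pos hp.pos).symm]
      rw [Nat.choose_succ_succ]
    have hdvd : (p : ℕ) ∣ p.choose (k+1) := hp.dvd_choose_self (Nat.succ_ne_zero k) hk
    have h0 : ((p.choose (k+1) : ℕ) : ZMod p) = 0 := by
      exact_mod_cast (ZMod.natCast_eq_zero_iff _ _).mpr hdvd
    have hcast := congrArg (fun n : ℕ => (n : ZMod p)) hpascal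
    push_cast at hcast
    rw [ih hklt, h0] at hcast
    rw [pow_succ]
    linear_combination hcast

/-- The key coefficient formula. -/
lemma st_formula (p : ℕ) [Fact p.Prime] (Q0 Q1 : MvPolynomial (Fin 2) (ZMod p))
    (hQ0 : Q0 * L2 p = L20 p) (hQ1 : Q1 * L2 p = L21 p) (i : ℕ) :
    St p i 0 Q0 = Q0 * ∑ k ∈ range p, ∑ r ∈ range (k+1),
      (if i = p*k+r then
        (((p-1).choose k : MvPolynomial (Fin 2) (ZMod p)) *
          ((k.choose r : MvPolynomial (Fin 2) (ZMod p))) * Q0^r * Q1^(k-r))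
       else 0) := by
  have hQ0e : Q0 = L2 p ^ (p - 1) := Q0_eq p Q0 hQ0
  have hfact : Polynomial.C (L2 p) *
      (1 + Polynomial.C Q1 * Polynomial.X^p + Polynomial.C Q0 * Polynomial.X^(p+1))
      = Polynomial.C (L2 p) + Polynomial.C (L21 p) * Polynomial.X ^ p
        + Polynomial.C (L20 p) * Polynomial.X ^ (p + 1) := by
    rw [← hQ0, ← hQ1]
    simp only [map_mul]
    ring
  have hmain : psi p (phi p Q0)
      = Polynomial.C Q0 *
        (1 + Polynomial.C Q1 * Polynomial.X^p + Polynomial.C Q0 * Polynomial.X^(p+1))^(p-1) := by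
    conv_lhs => rw [hQ0e, map_pow, map_pow, psi_phi_L2, ← hfact]
    rw [mul_pow, ← Polynomial.C_pow, ← hQ0e]
  rw [st_eq, hmain, Polynomial.coeff_C_mul, W_pow]
  congr 1
  rw [Polynomial.finset_sum_coeff]
  refine Finset.sum_congr rfl fun k hk => ?_
  rw [Polynomial.finset_sum_coeff]
  refine Finset.sum_congr rfl fun r hr => ?_
  rw [Polynomial.coeff_C_mul, Polynomial.coeff_X_pow, mul_ite, mul_one, mul_zero]

end StAux

open StAux in
theorem st_i0_Q20 (p : ℕ) (hp : p.Prime) (hodd : Odd p)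
    (Q0 Q1 : MvPolynomial (Fin 2) (ZMod p))
    (hQ0 : Q0 * L2 p = L20 p) (hQ1 : Q1 * L2 p = L21 p)
    (i : ℕ) :
    (i = p ^ 2 - 1 → St p i 0 Q0 = Q0 ^ p) ∧
    (∀ k r : ℕ, r ≤ k → k < p → i = k * p + r →
      St p i 0 Q0 = (-1 : MvPolynomial (Fin 2) (ZMod p)) ^ k *
        C ((k.choose r : ZMod p)) * Q0 ^ (r + 1) * Q1 ^ (k - r)) ∧
    ((i ≠ p ^ 2 - 1 ∧ ∀ k r : ℕ, r ≤ k → k < p → i ≠ k * p + r) →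
      St p i 0 Q0 = 0) := by
  haveI : Fact p.Prime := ⟨hp⟩
  have hmain : ∀ k r : ℕ, r ≤ k → k < p → i = k * p + r →
      St p i 0 Q0 = (-1 : MvPolynomial (Fin 2) (ZMod p)) ^ k *
        C ((k.choose r : ZMod p)) * Q0 ^ (r + 1) * Q1 ^ (k - r) := by
    intro k r hrk hkp hi
    have hrp : r < p := lt_of_le_of_lt hrk hkp
    rw [st_formula p Q0 Q1 hQ0 hQ1 i]
    rw [Finset.sum_eq_single k]
    · rw [Finset.sum_eq_single r]
      · rw [if_pos (by rw [hi, Nat.mul_comm])]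
        have hc1 : (((p-1).choose k : ℕ) : MvPolynomial (Fin 2) (ZMod p))
            = (-1 : MvPolynomial (Fin 2) (ZMod p))^k := by
          rw [← map_natCast (C : ZMod p →+* MvPolynomial (Fin 2) (ZMod p)),
            choose_sign hp k hkp, map_pow, map_neg, map_one]
        have hc2 : ((k.choose r : ℕ) : MvPolynomial (Fin 2) (ZMod p))
            = C ((k.choose r : ZMod p)) :=
          (map_natCast (C : ZMod p →+* MvPolynomial (Fin 2) (ZMod p)) _).symm
        rw [hc1, hc2]
        ring
      · intro r' hr' hne
        rw [if_neg]
        intro hcontr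
        have hr'k : r' ≤ k := Nat.lt_succ_iff.mp (Finset.mem_range.mp hr')
        have := rep_unique hp.pos hrp (lt_of_le_of_lt hr'k hkp)
          (by rw [← hcontr, hi, Nat.mul_comm] : p*k + r = p*k + r')
        exact hne this.2.symm
      · intro habs
        exact absurd (Finset.mem_range.mpr (Nat.lt_succ_of_le hrk)) habs
    · intro k' hk' hne
      apply Finset.sum_eq_zero
      intro r' hr'
      rw [if_neg]
      intro hcontr
      have hk'p : k' < p := Finset.mem_range.mp hk'
      have hr'k : r' ≤ k' := Nat.lt_succ_iff.mp (Finset.mem_range.mp hr')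
      have := rep_unique hp.pos hrp (lt_of_le_of_lt hr'k hk'p)
        (by rw [← hcontr, hi, Nat.mul_comm] : p*k + r = p*k' + r')
      exact hne this.1.symm
    · intro habs
      exact absurd (Finset.mem_range.mpr hkp) habs
  refine ⟨?_, hmain, ?_⟩
  · intro hi
    have hp1 : 1 ≤ p := hp.pos
    have hi' : i = (p-1) * p + (p-1) := by
      rw [hi, pow_two, show p * p = ((p-1)*p + (p-1)) + 1 from by
        obtain ⟨n, rfl⟩ : ∃ n, p = n + 1 := ⟨p - 1, by omega⟩
        simp only [Nat.add_sub_cancel]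
        ring]
      exact Nat.add_sub_cancel _ 1
    have := hmain (p-1) (p-1) le_rfl (Nat.sub_lt hp.pos one_pos) hi'
    rw [this, Nat.choose_self, Nat.sub_self, pow_zero, mul_one, Nat.cast_one, map_one,
      mul_one, Nat.sub_add_cancel hp1]
    have heven : Even (p - 1) := Nat.Odd.sub_odd hodd odd_one
    rw [heven.neg_one_pow, one_mul]
  · rintro ⟨-, hforall⟩
    rw [st_formula p Q0 Q1 hQ0 hQ1 i]
    rw [Finset.sum_eq_zero, mul_zero]
    intro k hk
    apply Finset.sum_eq_zero
    intro r hr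
    rw [if_neg]
    intro hcontr
    exact hforall k r (Nat.lt_succ_iff.mp (Finset.mem_range.mp hr)) (Finset.mem_range.mp hk)
      (by rw [hcontr, Nat.mul_comm])
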